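/- Let 0 < x_1 < x_2 < ... < x_n be real numbers, 1 ≤ k < n, p ∈ (0,1) and x_p > 0. Let λ* be the unique λ < k with γ̄(λ) > 0 satisfying γ̄(λ) log x_p + log(p/c̄(λ)) = 0. Then the supremum of log L(γ, c) over the constraint set {(γ, c): γ > 0, c > 0, c x_{n−k}^{−γ} < 1, γ log x_p + log(p/c) = 0} is attained at (γ, c) = (γ̄(λ*), c̄(λ*)). -/

import Mathlib

open Filter Real Set Topology

noncomputable section

/-- The censored log-likelihood `log L(γ, c)`. -/
def logLDet (x : ℕ → ℝ) (n k : ℕ) (γ c : ℝ) : ℝ :=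
  (∑ i ∈ Finset.Icc 1 k, Real.log (c * γ * x (n - i + 1) ^ (-γ - 1))) +
    ((n : ℝ) - (k : ℝ)) * Real.log (1 - c * x (n - k) ^ (-γ))

/-- The constrained maximizer `γ̄(λ)`. -/
def gambarDet (x : ℕ → ℝ) (n k : ℕ) (xp l : ℝ) : ℝ :=
  (k : ℝ) / ((∑ i ∈ Finset.Icc 1 k, (Real.log (x (n - i + 1)) - Real.log (x (n - k)))) +
    l * Real.log (x (n - k)) - l * Real.log xp)

/-- The constrained maximizer `c̄(λ)`. -/
def cbarDet (x : ℕ → ℝ) (n k : ℕ) (xp l : ℝ) : ℝ :=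
  x (n - k) ^ gambarDet x n k xp l * (((k : ℝ) - l) / ((n : ℝ) - l))

lemma logL_eq (x : ℕ → ℝ) (n k : ℕ) (hk : 1 ≤ k) (hkn : k < n)
    (hpos : ∀ i ∈ Finset.Icc 1 n, 0 < x i) (γ c : ℝ) (hγ : 0 < γ) (hc : 0 < c) :
    logLDet x n k γ c = (k : ℝ) * Real.log c + (k : ℝ) * Real.log γ +
      (-γ - 1) * (∑ i ∈ Finset.Icc 1 k, Real.log (x (n - i + 1))) +
      ((n : ℝ) - (k : ℝ)) * Real.log (1 - c * x (n - k) ^ (-γ)) := by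
  unfold logLDet
  have hsum : ∀ i ∈ Finset.Icc 1 k,
      Real.log (c * γ * x (n - i + 1) ^ (-γ - 1)) =
      (Real.log c + Real.log γ) + (-γ - 1) * Real.log (x (n - i + 1)) := by
    intro i hi
    simp only [Finset.mem_Icc] at hi
    have hxi : 0 < x (n - i + 1) := hpos _ (by simp only [Finset.mem_Icc]; omega)
    rw [Real.log_mul (by positivity) (by positivity), Real.log_mul (ne_of_gt hc) (ne_of_gt hγ),
      Real.log_rpow hxi]
  rw [Finset.sum_congr rfl hsum, Finset.sum_add_distrib, Finset.sum_const, ← Finset.mul_sum,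
    Nat.card_Icc]
  simp only [Nat.add_sub_cancel, nsmul_eq_mul]
  ring

/-- If `λ*` is the unique `λ < k` with `γ̄(λ) > 0` solving
`γ̄(λ) log x_p + log(p/c̄(λ)) = 0`, then the supremum of the censored log-likelihood over the
constraint set `{γ > 0, c > 0, c x_{n-k}^{-γ} < 1, γ log x_p + log(p/c) = 0}` is attained
at `(γ̄(λ*), c̄(λ*))`. -/
theorem stmt_8 (n k : ℕ) (hk : 1 ≤ k) (hkn : k < n) (x : ℕ → ℝ)
    (hpos : ∀ i ∈ Finset.Icc 1 n, 0 < x i)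
    (hmono : StrictMonoOn x (Set.Icc 1 n))
    (p : ℝ) (hp : p ∈ Set.Ioo (0 : ℝ) 1) (xp : ℝ) (hxp : 0 < xp)
    (lam : ℝ)
    (hlam : lam < (k : ℝ) ∧ 0 < gambarDet x n k xp lam ∧
      gambarDet x n k xp lam * Real.log xp + Real.log (p / cbarDet x n k xp lam) = 0)
    (huniq : ∀ l : ℝ, l < (k : ℝ) → 0 < gambarDet x n k xp l →
      gambarDet x n k xp l * Real.log xp + Real.log (p / cbarDet x n k xp l) = 0 → l = lam) :
    (0 < gambarDet x n k xp lam ∧ 0 < cbarDet x n k xp lam ∧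
      cbarDet x n k xp lam * x (n - k) ^ (-(gambarDet x n k xp lam)) < 1 ∧
      gambarDet x n k xp lam * Real.log xp +
        Real.log (p / cbarDet x n k xp lam) = 0) ∧
    ∀ γ c : ℝ, 0 < γ → 0 < c → c * x (n - k) ^ (-γ) < 1 →
      γ * Real.log xp + Real.log (p / c) = 0 →
      logLDet x n k γ c ≤ logLDet x n k (gambarDet x n k xp lam) (cbarDet x n k xp lam) := by
  obtain ⟨hp0, hp1⟩ := hp
  obtain ⟨hlk, hg0, hcon0⟩ := hlam
  have hxnk : 0 < x (n - k) := hpos _ (by simp only [Finset.mem_Icc]; omega)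
  set γ0 := gambarDet x n k xp lam with hγ0def
  set c0 := cbarDet x n k xp lam with hc0def
  set S := ∑ i ∈ Finset.Icc 1 k, Real.log (x (n - i + 1)) with hS
  set T := Real.log (x (n - k)) with hT
  set a := Real.log xp - T with ha
  have hkpos : (0:ℝ) < (k:ℝ) := by exact_mod_cast hk
  have hknR : (k:ℝ) < (n:ℝ) := by exact_mod_cast hkn
  have hnl : (0:ℝ) < (n:ℝ) - lam := by linarith
  have hkl : (0:ℝ) < (k:ℝ) - lam := by linarith
  have hnk : (0:ℝ) < (n:ℝ) - (k:ℝ) := by linarith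
  set r := ((k:ℝ) - lam) / ((n:ℝ) - lam) with hr
  have hr0 : 0 < r := div_pos hkl hnl
  have hr1 : r < 1 := (div_lt_one hnl).mpr (by linarith)
  have h1r : 1 - r = ((n:ℝ) - (k:ℝ)) / ((n:ℝ) - lam) := by
    rw [hr]; field_simp; ring
  have h1rpos : 0 < 1 - r := by linarith
  -- γ0 = k / D with D = S - k*T - lam*a
  have hγ0eq : γ0 = (k:ℝ) / (S - (k:ℝ)*T - lam*a) := by
    rw [hγ0def]; unfold gambarDet
    congr 1
    rw [Finset.sum_sub_distrib, Finset.sum_const, Nat.card_Icc]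
    simp only [Nat.add_sub_cancel, nsmul_eq_mul, ha]
    ring
  have hDpos : 0 < S - (k:ℝ)*T - lam*a := by
    by_contra h
    push_neg at h
    rcases lt_or_eq_of_le h with h' | h'
    · have : γ0 < 0 := by rw [hγ0eq]; exact div_neg_of_pos_of_neg hkpos h'
      linarith
    · rw [hγ0eq, h'] at hg0; simp at hg0
  have hD : (k:ℝ) / γ0 = S - (k:ℝ)*T - lam*a := by
    rw [hγ0eq]; field_simp
  -- facts about c0
  have hxγ0 : 0 < x (n - k) ^ γ0 := Real.rpow_pos_of_pos hxnk _
  have hc0eq : c0 = x (n - k) ^ γ0 * r := rfl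
  have hc0pos : 0 < c0 := by rw [hc0eq]; exact mul_pos hxγ0 hr0
  have hu0 : c0 * x (n - k) ^ (-γ0) = r := by
    rw [hc0eq, mul_comm (x (n - k) ^ γ0) r, mul_assoc, ← Real.rpow_add hxnk]
    simp
  have hlogc0 : Real.log c0 = γ0 * T + Real.log r := by
    rw [hc0eq, Real.log_mul (ne_of_gt hxγ0) (ne_of_gt hr0), Real.log_rpow hxnk]
  have hlogr : Real.log r = Real.log p + γ0 * a := by
    have h := hcon0
    rw [Real.log_div (ne_of_gt hp0) (ne_of_gt hc0pos), hlogc0] at h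
    rw [ha]; linarith [h]
  refine ⟨⟨hg0, hc0pos, by rw [hu0]; exact hr1, hcon0⟩, ?_⟩
  intro γ c hγ hc hu1 hcon
  have hupos : 0 < c * x (n - k) ^ (-γ) := mul_pos hc (Real.rpow_pos_of_pos hxnk _)
  have hlogc : Real.log c = Real.log p + γ * Real.log xp := by
    rw [Real.log_div (ne_of_gt hp0) (ne_of_gt hc)] at hcon
    linarith
  set u := c * x (n - k) ^ (-γ) with huu
  set δ := γ - γ0 with hδ
  have hlogu : Real.log u = Real.log p + γ * a := by
    rw [huu, Real.log_mul (ne_of_gt hc) (by positivity), Real.log_rpow hxnk, hlogc, ha]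
    ring
  have huval : u = r * Real.exp (δ * a) := by
    have hlog2 : Real.log (r * Real.exp (δ * a)) = Real.log p + γ * a := by
      rw [Real.log_mul (ne_of_gt hr0) (Real.exp_ne_zero _), Real.log_exp, hlogr, hδ]
      ring
    calc u = Real.exp (Real.log u) := (Real.exp_log hupos).symm
      _ = Real.exp (Real.log (r * Real.exp (δ * a))) := by rw [hlogu, hlog2]
      _ = r * Real.exp (δ * a) := Real.exp_log (mul_pos hr0 (Real.exp_pos _))
  -- rewrite both sides
  rw [logL_eq x n k hk hkn hpos γ c hγ hc, logL_eq x n k hk hkn hpos γ0 c0 hg0 hc0pos,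
    hu0, ← huu, ← hS]
  -- key inequalities
  have B : (k:ℝ) * (Real.log γ - Real.log γ0) ≤ δ * (S - (k:ℝ)*T - lam*a) := by
    have h1 : Real.log (γ / γ0) ≤ γ / γ0 - 1 :=
      Real.log_le_sub_one_of_pos (div_pos hγ hg0)
    rw [Real.log_div (ne_of_gt hγ) (ne_of_gt hg0)] at h1
    have h2 : (k:ℝ) * (Real.log γ - Real.log γ0) ≤ (k:ℝ) * (γ / γ0 - 1) :=
      mul_le_mul_of_nonneg_left h1 hkpos.le
    have h3 : (k:ℝ) * (γ / γ0 - 1) = δ * ((k:ℝ) / γ0) := by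
      rw [hδ]; field_simp
    rw [h3, hD] at h2
    exact h2
  have C : ((n:ℝ) - (k:ℝ)) * (Real.log (1 - u) - Real.log (1 - r)) ≤
      ((k:ℝ) - lam) - ((k:ℝ) - lam) * Real.exp (δ * a) := by
    have hu1' : 0 < 1 - u := by rw [huu]; linarith
    have h1 : Real.log ((1 - u) / (1 - r)) ≤ (1 - u) / (1 - r) - 1 :=
      Real.log_le_sub_one_of_pos (div_pos hu1' h1rpos)
    rw [Real.log_div (ne_of_gt hu1') (ne_of_gt h1rpos)] at h1
    have h2 : ((n:ℝ) - (k:ℝ)) * (Real.log (1 - u) - Real.log (1 - r)) ≤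
        ((n:ℝ) - (k:ℝ)) * ((1 - u) / (1 - r) - 1) := mul_le_mul_of_nonneg_left h1 hnk.le
    have h3 : ((n:ℝ) - (k:ℝ)) * ((1 - u) / (1 - r) - 1) =
        ((k:ℝ) - lam) - ((k:ℝ) - lam) * Real.exp (δ * a) := by
      rw [huval, h1r, hr]
      field_simp
      ring
    rw [h3] at h2
    exact h2
  have D : ((k:ℝ) - lam) * (δ * a) + (((k:ℝ) - lam) - ((k:ℝ) - lam) * Real.exp (δ * a)) ≤ 0 := by
    have h := Real.add_one_le_exp (δ * a)
    have h2 := mul_le_mul_of_nonneg_left h hkl.le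
    linarith [h2]
  have E1 : (k:ℝ) * (Real.log c - Real.log c0) = (k:ℝ) * (δ * Real.log xp) := by
    rw [hlogc, hlogc0, hlogr, hδ, ha]; ring
  have alg : (k:ℝ) * (δ * Real.log xp) + δ * (S - (k:ℝ)*T - lam*a) - δ * S =
      ((k:ℝ) - lam) * (δ * a) := by
    rw [ha]; ring
  have hδS : δ * S = γ * S - γ0 * S := by rw [hδ]; ring
  have g1 : (-γ - 1) * S = -(γ * S) - S := by ring
  have g2 : (-γ0 - 1) * S = -(γ0 * S) - S := by ring
  linarith [B, C, D, E1, alg, hδS, g1, g2]
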